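/- Let G be a finite group, N a normal subgroup of G, and σ ∈ G such that G is generated by N together with σ. Let V be a finite-dimensional complex representation of G that is irreducible, and suppose that the restriction of V to N is not irreducible. Then the character of V vanishes on the coset Nσ: for every n ∈ N, Tr_V(ρ(n·σ)) = 0. -/

import Mathlib

open CategoryTheory Module Representation
noncomputable section

def subRep {k G M : Type*} [CommSemiring k] [Monoid G] [AddCommMonoid M] [Module k M]
    (ρ : Representation k G M) (W : Submodule k M) (h : ∀ g : G, ∀ v ∈ W, ρ g v ∈ W) :
    Representation k G W where
  toFun g := (ρ g).restrict (h g)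
  map_one' := by ext x; simp [LinearMap.restrict_apply]
  map_mul' g₁ g₂ := by ext x; simp [LinearMap.restrict_apply]

theorem simple_of_irr {G : Type} [Group G] {V : Type} [AddCommGroup V] [Module ℂ V]
    [FiniteDimensional ℂ V] (ρ : Representation ℂ G V) [Nontrivial V]
    (hirr : ∀ W : Submodule ℂ V, (∀ g : G, ∀ v ∈ W, ρ g v ∈ W) → W = ⊥ ∨ W = ⊤) :
    Simple (FDRep.of ρ) := by
  constructor
  intro Y f m
  have e1 : ∀ (g : G) (y : Y), f.hom (Y.ρ g y) = ρ g (f.hom y) := by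
    intro g y
    have := congrArg (fun φ => φ y) (f.comm g)
    exact this
  constructor
  · rintro hiso rfl
    obtain ⟨v, hv⟩ := exists_ne (0 : V)
    have h1 : (inv (0 : Y ⟶ FDRep.of ρ) ≫ (0 : Y ⟶ FDRep.of ρ)) = 𝟙 (FDRep.of ρ) :=
      IsIso.inv_hom_id _
    have h2 := congrArg (fun φ : FDRep.of ρ ⟶ FDRep.of ρ => φ.hom v) h1
    simp only [Action.comp_hom, Action.zero_hom, Action.id_hom] at h2
    simp at h2
    exact hv h2.symm
  · intro hf
    set F : Y →ₗ[ℂ] V := f.hom.hom.hom with hF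
    have hrange : LinearMap.range F = ⊤ := by
      have hinvr : ∀ g : G, ∀ v ∈ LinearMap.range F, ρ g v ∈ LinearMap.range F := by
        rintro g v ⟨y, rfl⟩
        exact ⟨Y.ρ g y, e1 g y⟩
      rcases hirr (LinearMap.range F) hinvr with h | h
      · exfalso
        apply hf
        apply Action.hom_ext
        ext y
        have : F y ∈ LinearMap.range F := ⟨y, rfl⟩
        rw [h] at this
        simpa using this
      · exact h
    have hker : LinearMap.ker F = ⊥ := by
      by_contra hK
      obtain ⟨x, hxK, hx0⟩ := Submodule.exists_mem_ne_zero_of_ne_bot hK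
      have hinv : ∀ g : G, ∀ v ∈ LinearMap.ker F, Y.ρ g v ∈ LinearMap.ker F := by
        intro g v hv
        have h2 : F (Y.ρ g v) = ρ g (F v) := e1 g v
        simp only [LinearMap.mem_ker] at hv ⊢
        rw [h2, hv, map_zero]
      let Z : FDRep ℂ G := FDRep.of (subRep Y.ρ (LinearMap.ker F) hinv)
      let u : Z ⟶ Y := ⟨ConcreteCategory.ofHom (LinearMap.ker F).subtype, by intro g; rfl⟩
      have hu : u ≫ f = (0 : Z ⟶ Y) ≫ f := by
        apply Action.hom_ext
        ext z
        let z' : LinearMap.ker F := z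
        have h0 : F ((LinearMap.ker F).subtype z) = 0 := z'.2
        show F ((LinearMap.ker F).subtype z) = F ((0 : Z.V ⟶ Y.V).hom.hom z)
        rw [h0]
        have hzz : (0 : Z.V ⟶ Y.V).hom.hom z = 0 := rfl
        rw [hzz, map_zero]
      have huz := (cancel_mono f).mp hu
      have hz := congrArg (fun φ : Z ⟶ Y => φ.hom.hom.hom ⟨x, hxK⟩) huz
      simp at hz
      exact hx0 hz
    have hbij : Function.Bijective F :=
      ⟨LinearMap.ker_eq_bot.mp hker, LinearMap.range_eq_top.mp hrange⟩
    let E := LinearEquiv.ofBijective F hbij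
    have hE : ∀ y : Y, E y = F y := fun _ => rfl
    refine ⟨⟨⟨ConcreteCategory.ofHom (E.symm : V →ₗ[ℂ] Y), ?_⟩, ?_, ?_⟩⟩
    · intro g
      ext v
      show E.symm (ρ g v) = Y.ρ g (E.symm v)
      apply hbij.1
      show F (E.symm (ρ g v)) = F (Y.ρ g (E.symm v))
      calc F (E.symm (ρ g v)) = ρ g v := E.apply_symm_apply _
        _ = ρ g (F (E.symm v)) := by rw [show F (E.symm v) = v from E.apply_symm_apply _]
        _ = F (Y.ρ g (E.symm v)) := (e1 _ _).symm
    · apply Action.hom_ext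
      ext y
      show E.symm (F y) = y
      rw [← hE, E.symm_apply_apply]
    · apply Action.hom_ext
      ext v
      show F (E.symm v) = v
      rw [← hE, E.apply_symm_apply]

theorem two_le_finrank_invariants {H : Type} [Group H] [Fintype H] {V : Type} [AddCommGroup V]
    [Module ℂ V] [FiniteDimensional ℂ V] (τ : Representation ℂ H V) (W : Submodule ℂ V)
    (hinv : ∀ h : H, ∀ v ∈ W, τ h v ∈ W) (hbot : W ≠ ⊥) (htop : W ≠ ⊤) :
    2 ≤ finrank ℂ (invariants (linHom τ τ)) := by
  classical
  obtain ⟨U, hU⟩ := Submodule.exists_isCompl W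
  set p0 : V →ₗ[ℂ] V := W.subtype ∘ₗ W.linearProjOfIsCompl U hU with hp0
  have hp0W : ∀ v ∈ W, p0 v = v := by
    intro v hv
    have := Submodule.linearProjOfIsCompl_apply_left hU ⟨v, hv⟩
    simp only [hp0, LinearMap.comp_apply, Submodule.coe_subtype]
    rw [show (⟨v, hv⟩ : W) = (⟨v, hv⟩ : W) from rfl] at this
    exact congrArg (Subtype.val) this
  have hp0mem : ∀ v : V, p0 v ∈ W := fun v => (W.linearProjOfIsCompl U hU v).2
  set c : ℂ := (Fintype.card H : ℂ) with hc
  have hc0 : c ≠ 0 := by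
    rw [hc]; exact_mod_cast Fintype.card_ne_zero
  set p : V →ₗ[ℂ] V := c⁻¹ • ∑ h : H, τ h ∘ₗ p0 ∘ₗ τ h⁻¹ with hp
  have happ : ∀ v : V, p v = c⁻¹ • ∑ h : H, τ h (p0 (τ h⁻¹ v)) := by
    intro v
    rw [hp]
    simp [LinearMap.sum_apply]
  have hpmem : ∀ v : V, p v ∈ W := by
    intro v
    rw [happ]
    exact W.smul_mem _ (Submodule.sum_mem _ fun h _ => hinv h _ (hp0mem _))
  have hpW : ∀ v ∈ W, p v = v := by
    intro v hv
    rw [happ]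
    have : ∀ h : H, τ h (p0 (τ h⁻¹ v)) = v := by
      intro h
      rw [hp0W _ (hinv h⁻¹ v hv), ← Module.End.mul_apply, ← map_mul, mul_inv_cancel, map_one,
        Module.End.one_apply]
    simp only [this, Finset.sum_const, Finset.card_univ, (Nat.cast_smul_eq_nsmul ℂ _ _).symm]
    rw [smul_smul, inv_mul_cancel₀ hc0, one_smul]
  have hpinv : p ∈ invariants (linHom τ τ) := by
    rw [mem_invariants]
    intro h₀
    rw [linHom_apply]
    ext v
    simp only [LinearMap.comp_apply]
    rw [happ, happ]
    rw [map_smul]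
    congr 1
    rw [map_sum]
    refine Fintype.sum_equiv (Equiv.mulLeft h₀) _ _ ?_
    intro h
    simp only [Equiv.coe_mulLeft]
    rw [← Module.End.mul_apply (τ h₀) (τ h), ← map_mul]
    congr 2
    rw [← Module.End.mul_apply (τ h⁻¹) (τ h₀⁻¹), ← map_mul, mul_inv_rev]
  have hidinv : (LinearMap.id : V →ₗ[ℂ] V) ∈ invariants (linHom τ τ) := by
    rw [mem_invariants]
    intro h₀
    rw [linHom_apply]
    ext v
    simp [← Module.End.mul_apply (τ h₀) (τ h₀⁻¹), ← map_mul]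
  obtain ⟨w, hwW, hw0⟩ := Submodule.exists_mem_ne_zero_of_ne_bot hbot
  obtain ⟨v0, hv0⟩ : ∃ v0, v0 ∉ W := by
    by_contra h
    push_neg at h
    exact htop (Submodule.eq_top_iff'.mpr h)
  have hli : LinearIndependent ℂ
      ![(⟨LinearMap.id, hidinv⟩ : invariants (linHom τ τ)), ⟨p, hpinv⟩] := by
    rw [LinearIndependent.pair_iff]
    intro s t hst
    have hst' : s • (LinearMap.id : V →ₗ[ℂ] V) + t • p = 0 := by
      have := congrArg (fun x : invariants (linHom τ τ) => (x : V →ₗ[ℂ] V)) hst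
      simpa using this
    have hw : (s + t) • w = 0 := by
      have := LinearMap.congr_fun hst' w
      simpa [hpW w hwW, add_smul] using this
    have hst2 : s + t = 0 := by
      rcases smul_eq_zero.mp hw with h | h
      · exact h
      · exact absurd h hw0
    have hs : s = 0 := by
      by_contra hs
      have := LinearMap.congr_fun hst' v0
      simp only [LinearMap.add_apply, LinearMap.smul_apply, LinearMap.id_apply,
        LinearMap.zero_apply] at this
      have h1 : s • v0 = (-t) • p v0 := by
        rw [neg_smul]
        exact eq_neg_of_add_eq_zero_left this
      have h2 : v0 = (s⁻¹ * -t) • p v0 := by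
        rw [← smul_smul, ← h1, smul_smul, inv_mul_cancel₀ hs, one_smul]
      exact hv0 (h2 ▸ Submodule.smul_mem _ _ (hpmem v0))
    refine ⟨hs, ?_⟩
    rw [hs, zero_add] at hst2
    exact hst2
  simpa using hli.fintype_card_le_finrank

theorem exists_dual_char {G : Type} [Group G] [Fintype G] (N : Subgroup G) [N.Normal] (σ : G)
    (hgen : Subgroup.closure ((N : Set G) ∪ {σ}) = ⊤) :
    ∃ (m : ℕ) (lam : G →* ℂˣ), 0 < m ∧ Fintype.card G = m * Nat.card N ∧
      (∀ g : G, lam g = 1 ↔ g ∈ N) ∧ (∀ g : G, (lam g) ^ m = 1) ∧ orderOf (lam σ) = m := by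
  classical
  let π := QuotientGroup.mk' N
  have hsurj : Function.Surjective π := QuotientGroup.mk'_surjective N
  have hzp : ∀ q : G ⧸ N, q ∈ Subgroup.zpowers (π σ) := by
    intro q
    obtain ⟨g, rfl⟩ := hsurj q
    have hg : g ∈ Subgroup.closure ((N : Set G) ∪ {σ}) := by rw [hgen]; trivial
    induction hg using Subgroup.closure_induction with
    | mem x hx =>
      rcases hx with hx | hx
      · have : π x = 1 := (QuotientGroup.eq_one_iff x).mpr hx
        rw [this]; exact Subgroup.one_mem _
      · rw [Set.mem_singleton_iff] at hx
        rw [hx]; exact Subgroup.mem_zpowers _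
    | one => rw [map_one]; exact Subgroup.one_mem _
    | mul x y _ _ hx hy => rw [map_mul]; exact Subgroup.mul_mem _ hx hy
    | inv x _ hx => rw [map_inv]; exact Subgroup.inv_mem _ hx
  haveI : IsCyclic (G ⧸ N) := ⟨⟨π σ, hzp⟩⟩
  set m := Fintype.card (G ⧸ N) with hmdef
  have hm : 0 < m := Fintype.card_pos
  haveI : NeZero m := ⟨hm.ne'⟩
  have hcardru : Nat.card (G ⧸ N) = Nat.card (rootsOfUnity m ℂ) := by
    rw [Complex.card_rootsOfUnity, Nat.card_eq_fintype_card]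
  let e : (G ⧸ N) ≃* rootsOfUnity m ℂ := mulEquivOfCyclicCardEq hcardru
  let lam : G →* ℂˣ := ((rootsOfUnity m ℂ).subtype.comp e.toMonoidHom).comp π
  have hinj : Function.Injective ((rootsOfUnity m ℂ).subtype.comp e.toMonoidHom) :=
    (Subgroup.subtype_injective _).comp e.injective
  have hker : ∀ g : G, lam g = 1 ↔ g ∈ N := by
    intro g
    rw [← QuotientGroup.eq_one_iff (N := N) g]
    have hπg : π g = (g : G ⧸ N) := rfl
    constructor
    · intro h
      have h1 : ((rootsOfUnity m ℂ).subtype.comp e.toMonoidHom) (π g) = 1 := h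
      have h2 : π g = 1 := hinj (by simpa using h1)
      rw [← hπg, h2]
    · intro h
      show ((rootsOfUnity m ℂ).subtype.comp e.toMonoidHom) (π g) = 1
      rw [hπg, h, map_one]
  have hpow : ∀ g : G, (lam g) ^ m = 1 := by
    intro g
    have h2 := (e (π g)).2
    rw [mem_rootsOfUnity] at h2
    exact h2
  have hordπ : orderOf (π σ) = m := by
    rw [orderOf_eq_card_of_forall_mem_zpowers hzp, Nat.card_eq_fintype_card]
  have hord : orderOf (lam σ) = m := by
    show orderOf (((rootsOfUnity m ℂ).subtype.comp e.toMonoidHom) (π σ)) = m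
    rw [orderOf_injective _ hinj, hordπ]
  refine ⟨m, lam, hm, ?_, hker, hpow, hord⟩
  rw [← Nat.card_eq_fintype_card, hmdef, ← Nat.card_eq_fintype_card]
  exact Subgroup.card_eq_card_quotient_mul_card_subgroup N

theorem core {G : Type} [Group G] [Fintype G] (N : Subgroup G) [N.Normal] (σ : G)
    (hgen : Subgroup.closure ((N : Set G) ∪ {σ}) = ⊤)
    {V : Type} [AddCommGroup V] [Module ℂ V] [FiniteDimensional ℂ V]
    (ρ : Representation ℂ G V)
    (hirr : ∀ W : Submodule ℂ V, (∀ g : G, ∀ v ∈ W, ρ g v ∈ W) → W = ⊥ ∨ W = ⊤)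
    (hnotirrN : ¬ ∀ W : Submodule ℂ V, (∀ n ∈ N, ∀ v ∈ W, ρ n v ∈ W) → W = ⊥ ∨ W = ⊤) :
    ∀ n ∈ N, LinearMap.trace ℂ V (ρ (n * σ)) = 0 := by
  classical
  intro n hn
  push_neg at hnotirrN
  obtain ⟨W1, hW1inv, hW1bot, hW1top⟩ := hnotirrN
  haveI : Nontrivial V := by
    obtain ⟨x, hxW, hx0⟩ := Submodule.exists_mem_ne_zero_of_ne_bot hW1bot
    exact ⟨x, 0, hx0⟩
  obtain ⟨m, lam, hm, hcard, hker, hpow, hord⟩ := exists_dual_char N σ hgen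
  set χ : G → ℂ := fun g => LinearMap.trace ℂ V (ρ g) with hχ
  -- the twisted representations
  let ρT : ℕ → Representation ℂ G V := fun j =>
    { toFun := fun g => ((lam g : ℂ) ^ j) • ρ g
      map_one' := by simp
      map_mul' := fun g h => by
        ext v
        simp only [Units.val_mul, mul_pow, LinearMap.smul_apply, Module.End.mul_apply,
          map_smul, map_mul]
        rw [mul_smul, smul_comm] }
  haveI hsimple : Simple (FDRep.of ρ) := simple_of_irr ρ hirr
  haveI hsimpleT : ∀ j : ℕ, Simple (FDRep.of (ρT j)) := by
    intro j
    apply simple_of_irr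
    intro W hW
    apply hirr W
    intro g v hv
    have h1 : ρT j g v ∈ W := hW g v hv
    have h2 : ρT j g v = ((lam g : ℂ) ^ j) • ρ g v := rfl
    have h3 : ρ g v = ((lam g : ℂ) ^ j)⁻¹ • ρT j g v := by
      rw [h2, smul_smul, inv_mul_cancel₀ (pow_ne_zero _ (Units.ne_zero _)), one_smul]
    rw [h3]
    exact Submodule.smul_mem _ _ h1
  -- characters of the twisted representations
  have hchar : ∀ (j : ℕ) (g : G), (FDRep.of (ρT j)).character g = (lam g : ℂ) ^ j * χ g := by
    intro j g
    show LinearMap.trace ℂ V (ρT j g) = _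
    have : ρT j g = ((lam g : ℂ) ^ j) • ρ g := rfl
    rw [this, map_smul, smul_eq_mul]
  have hcharX : ∀ g : G, (FDRep.of ρ).character g = χ g := fun g => rfl
  -- orthogonality
  letI : Fintype G := (inferInstance : Fintype G)
  letI : Invertible ((Nat.card G : ℂ)) :=
    invertibleOfNonzero (by rw [Nat.card_eq_fintype_card]; exact_mod_cast Fintype.card_ne_zero)
  have horth : ∀ j : ℕ,
      ⅟ (Fintype.card G : ℂ) • ∑ g : G, (FDRep.of (ρT j)).character g * (FDRep.of ρ).character g⁻¹
        = if Nonempty (FDRep.of (ρT j) ≅ FDRep.of ρ) then 1 else 0 := by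
    intro j
    rw [invOf_eq_inv, smul_eq_mul, Fintype.card_eq_nat_card]
    exact FDRep.char_orthonormal (FDRep.of (ρT j)) (FDRep.of ρ)
  -- geometric sum
  have hgeom : ∀ g : G, (∑ j ∈ Finset.range m, ((lam g : ℂ)) ^ j)
      = if g ∈ N then (m : ℂ) else 0 := by
    intro g
    by_cases hgN : g ∈ N
    · rw [if_pos hgN]
      have : lam g = 1 := (hker g).mpr hgN
      simp [this]
    · rw [if_neg hgN]
      have hne1 : (lam g : ℂ) ≠ 1 := by
        intro h
        exact hgN ((hker g).mp (Units.ext h))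
      rw [geom_sum_eq hne1]
      have : ((lam g : ℂ)) ^ m = 1 := by
        have := hpow g
        calc ((lam g : ℂ)) ^ m = ((lam g ^ m : ℂˣ) : ℂ) := by rw [Units.val_pow_eq_pow_val]
          _ = 1 := by rw [this, Units.val_one]
      rw [this, sub_self, zero_div]
  -- N-side: sum over subgroup
  letI : Fintype ↥N := Fintype.ofFinite _
  set cN : ℕ := Fintype.card ↥N with hcN
  have hcN' : (Nat.card ↥N) = cN := Nat.card_eq_fintype_card
  -- the restricted representation
  set ρN : Representation ℂ ↥N V := ρ.comp N.subtype with hρN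
  letI : Invertible ((Fintype.card ↥N : ℂ)) :=
    invertibleOfNonzero (by exact_mod_cast Fintype.card_ne_zero)
  set YN : FDRep ℂ ↥N := FDRep.of ρN with hYN
  have hNavg : (finrank ℂ (invariants (linHom ρN ρN)) : ℂ)
      = (cN : ℂ)⁻¹ * ∑ x : ↥N, χ ((x⁻¹ : ↥N) : G) * χ (x : G) := by
    have havg := FDRep.average_char_eq_finrank_invariants (FDRep.of (linHom ρN ρN))
    calc ((finrank ℂ (invariants (linHom ρN ρN)) : ℂ))
        = ⅟(Fintype.card ↥N : ℂ) • ∑ g : ↥N, (FDRep.of (linHom ρN ρN)).character g := by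
          rw [invOf_eq_inv, smul_eq_mul, Fintype.card_eq_nat_card]; exact havg.symm
      _ = (cN : ℂ)⁻¹ * ∑ x : ↥N, χ ((x⁻¹ : ↥N) : G) * χ (x : G) := by
          rw [invOf_eq_inv, smul_eq_mul, hcN]
          congr 1
          apply Finset.sum_congr rfl
          intro x _
          exact FDRep.char_linHom YN YN x
  have h2le : 2 ≤ finrank ℂ (invariants (linHom ρN ρN)) := by
    refine two_le_finrank_invariants ρN W1 ?_ hW1bot hW1top
    intro x v hv
    exact hW1inv ↑x x.2 v hv
  have hmain : (finrank ℂ (invariants (linHom ρN ρN)) : ℂ)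
      = ∑ j ∈ Finset.range m, (if Nonempty (FDRep.of (ρT j) ≅ FDRep.of ρ) then (1:ℂ) else 0) := by
    have e1 : ∀ j : ℕ, (if Nonempty (FDRep.of (ρT j) ≅ FDRep.of ρ) then (1:ℂ) else 0)
        = (Fintype.card G : ℂ)⁻¹ * ∑ g : G, (lam g : ℂ)^j * (χ g * χ g⁻¹) := by
      intro j
      rw [← horth j, invOf_eq_inv, smul_eq_mul]
      congr 1
      apply Finset.sum_congr rfl
      intro g _
      rw [hchar j g, hcharX g⁻¹, mul_assoc]
    rw [Finset.sum_congr rfl (fun j _ => e1 j), ← Finset.mul_sum, Finset.sum_comm]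
    have e2 : ∀ g : G, (∑ j ∈ Finset.range m, (lam g : ℂ)^j * (χ g * χ g⁻¹))
        = (if g ∈ N then (m:ℂ) * (χ g * χ g⁻¹) else 0) := by
      intro g
      rw [← Finset.sum_mul, hgeom g, ite_mul, zero_mul]
    rw [Finset.sum_congr rfl (fun g _ => e2 g)]
    have e3 : (∑ g : G, if g ∈ N then (m:ℂ) * (χ g * χ g⁻¹) else 0)
        = ∑ x : ↥N, (m:ℂ) * (χ (x : G) * χ ((x : G))⁻¹) := by
      rw [← Finset.sum_filter]
      exact Finset.sum_subtype _ (by simp) _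
    rw [e3, ← Finset.mul_sum]
    have hmne : (m:ℂ) ≠ 0 := by exact_mod_cast hm.ne'
    have hcNne : (cN:ℂ) ≠ 0 := by
      have : (0:ℕ) < cN := Fintype.card_pos
      exact_mod_cast this.ne'
    have hcastcard : (Fintype.card G : ℂ) = (m : ℂ) * (cN : ℂ) := by
      rw [hcard, hcN']
      push_cast
      ring
    rw [hNavg, hcastcard]
    have e4 : ∀ x : ↥N, χ ((x⁻¹ : ↥N) : G) * χ (x : G) = χ (x : G) * χ ((x : G))⁻¹ := by
      intro x
      rw [mul_comm]
      congr 2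
    rw [Finset.sum_congr rfl (fun x _ => e4 x)]
    field_simp
  obtain ⟨j, hjm, hj0, hiso⟩ :
      ∃ j, j ∈ Finset.range m ∧ j ≠ 0 ∧ Nonempty (FDRep.of (ρT j) ≅ FDRep.of ρ) := by
    by_contra hcon
    push_neg at hcon
    have hsum : ∑ j ∈ Finset.range m, (if Nonempty (FDRep.of (ρT j) ≅ FDRep.of ρ) then (1:ℂ) else 0)
        = (if Nonempty (FDRep.of (ρT 0) ≅ FDRep.of ρ) then (1:ℂ) else 0) := by
      apply Finset.sum_eq_single_of_mem 0 (Finset.mem_range.mpr hm)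
      intro b hb hb0
      rw [if_neg (not_nonempty_iff.mpr (hcon b hb hb0))]
    rw [hsum] at hmain
    by_cases hiso0 : Nonempty (FDRep.of (ρT 0) ≅ FDRep.of ρ)
    · rw [if_pos hiso0] at hmain
      have h1 : finrank ℂ (invariants (linHom ρN ρN)) = 1 := Nat.cast_eq_one.mp hmain
      omega
    · rw [if_neg hiso0] at hmain
      have h1 : finrank ℂ (invariants (linHom ρN ρN)) = 0 := Nat.cast_eq_zero.mp hmain
      omega
  obtain ⟨iso⟩ := hiso
  have hchareq := FDRep.char_iso iso
  have heval : (lam (n * σ) : ℂ)^j * χ (n * σ) = χ (n * σ) := by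
    have := congrFun hchareq (n * σ)
    rw [hchar j (n*σ), hcharX (n*σ)] at this
    exact this
  have hlam : lam (n * σ) = lam σ := by rw [map_mul, (hker n).mpr hn, one_mul]
  rw [hlam] at heval
  have hnot1 : ((lam σ : ℂ))^j ≠ 1 := by
    intro h
    have hu : (lam σ)^j = 1 := Units.ext (by simpa using h)
    have hdvd : m ∣ j := hord ▸ orderOf_dvd_of_pow_eq_one hu
    have hle : m ≤ j := Nat.le_of_dvd (Nat.pos_of_ne_zero hj0) hdvd
    exact absurd (Finset.mem_range.mp hjm) (not_lt.mpr hle)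
  have hzero : (((lam σ : ℂ))^j - 1) * χ (n*σ) = 0 := by
    rw [sub_mul, one_mul, heval, sub_self]
  rcases mul_eq_zero.mp hzero with h | h
  · exact absurd (sub_eq_zero.mp h) hnot1
  · exact h



/-- Let `G` be a finite group, `N ⊴ G`, and `σ ∈ G` with `G` generated by `N` and `σ`.
If `V` is a finite-dimensional complex representation of `G` which is irreducible but
whose restriction to `N` is not irreducible, then the character of `V` vanishes on the
coset `Nσ`. -/
theorem character_vanishes_on_coset
    {G : Type*} [Group G] [Fintype G] (N : Subgroup G) [N.Normal] (σ : G)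
    (hgen : Subgroup.closure ((N : Set G) ∪ {σ}) = ⊤)
    {V : Type*} [AddCommGroup V] [Module ℂ V] [FiniteDimensional ℂ V]
    (ρ : Representation ℂ G V)
    (hirr : ∀ W : Submodule ℂ V, (∀ g : G, ∀ v ∈ W, ρ g v ∈ W) → W = ⊥ ∨ W = ⊤)
    (hnotirrN : ¬ ∀ W : Submodule ℂ V, (∀ n ∈ N, ∀ v ∈ W, ρ n v ∈ W) → W = ⊥ ∨ W = ⊤) :
    ∀ n ∈ N, LinearMap.trace ℂ V (ρ (n * σ)) = 0 := by
  classical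
  intro n hn
  haveI : Small.{0} G := by infer_instance
  haveI : Small.{0} V := small_of_injective
    (f := ((Module.finBasis ℂ V).equivFun : V → (Fin (Module.finrank ℂ V) → ℂ)))
    (LinearEquiv.injective _)
  let e : Shrink.{0} G ≃* G := Shrink.mulEquiv
  let ℓ : Shrink.{0} V ≃ₗ[ℂ] V := Shrink.linearEquiv ℂ V
  haveI : FiniteDimensional ℂ (Shrink.{0} V) := LinearEquiv.finiteDimensional ℓ.symm
  letI : Fintype (Shrink.{0} G) := Fintype.ofEquiv G (equivShrink G)
  -- transported data
  let N₀ : Subgroup (Shrink.{0} G) := N.comap e.toMonoidHom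
  haveI : N₀.Normal := Subgroup.Normal.comap ‹N.Normal› e.toMonoidHom
  let σ₀ : Shrink.{0} G := e.symm σ
  let ρ₀ : Representation ℂ (Shrink.{0} G) (Shrink.{0} V) :=
    { toFun := fun g => ℓ.symm.conj (ρ (e g))
      map_one' := by ext v; simp [LinearEquiv.conj_apply]
      map_mul' := fun g h => by ext v; simp [LinearEquiv.conj_apply] }
  have hρ₀ : ∀ (g : Shrink.{0} G) (v : Shrink.{0} V), ρ₀ g v = ℓ.symm (ρ (e g) (ℓ v)) := by
    intro g v; rfl
  -- generation
  have hgen₀ : Subgroup.closure ((N₀ : Set (Shrink.{0} G)) ∪ {σ₀}) = ⊤ := by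
    rw [Subgroup.eq_top_iff']
    intro g
    have hg : e g ∈ Subgroup.closure ((N : Set G) ∪ {σ}) := by rw [hgen]; trivial
    have key : ∀ x : G, x ∈ Subgroup.closure ((N : Set G) ∪ {σ}) →
        e.symm x ∈ Subgroup.closure ((N₀ : Set (Shrink.{0} G)) ∪ {σ₀}) := by
      intro x hx
      induction hx using Subgroup.closure_induction with
      | mem y hy =>
        apply Subgroup.subset_closure
        rcases hy with hy | hy
        · left
          show e.symm y ∈ N₀
          simp only [N₀, Subgroup.mem_comap]
          rw [show e.toMonoidHom (e.symm y) = y from e.apply_symm_apply y]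
          exact hy
        · right
          rw [Set.mem_singleton_iff] at hy ⊢
          rw [hy]
      | one => rw [map_one]; exact Subgroup.one_mem _
      | mul x y _ _ hx hy => rw [map_mul]; exact Subgroup.mul_mem _ hx hy
      | inv x _ hx => rw [map_inv]; exact Subgroup.inv_mem _ hx
    have := key (e g) hg
    rwa [e.symm_apply_apply] at this
  -- irreducibility
  have hirr₀ : ∀ W : Submodule ℂ (Shrink.{0} V),
      (∀ g : Shrink.{0} G, ∀ v ∈ W, ρ₀ g v ∈ W) → W = ⊥ ∨ W = ⊤ := by
    intro W₀ hW₀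
    set W : Submodule ℂ V := W₀.map ℓ.toLinearMap with hW
    have hWinv : ∀ g : G, ∀ v ∈ W, ρ g v ∈ W := by
      rintro g v ⟨w, hw, rfl⟩
      refine ⟨ρ₀ (e.symm g) w, hW₀ _ _ hw, ?_⟩
      rw [hρ₀]
      simp [e.apply_symm_apply]
    rcases hirr W hWinv with h | h
    · left
      rw [eq_bot_iff]
      intro w hw
      have : ℓ w ∈ W := ⟨w, hw, rfl⟩
      rw [h] at this
      simp only [Submodule.mem_bot] at this ⊢
      exact ℓ.injective (by simpa using this)
    · right
      rw [eq_top_iff]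
      intro w _
      have : ℓ w ∈ (⊤ : Submodule ℂ V) := trivial
      rw [← h] at this
      obtain ⟨w', hw', hww⟩ := this
      rwa [show w' = w from ℓ.injective hww] at hw'
  -- non-irreducibility of the restriction
  have hnotirrN₀ : ¬ ∀ W : Submodule ℂ (Shrink.{0} V),
      (∀ n ∈ N₀, ∀ v ∈ W, ρ₀ n v ∈ W) → W = ⊥ ∨ W = ⊤ := by
    intro hall
    apply hnotirrN
    intro W hWinv
    set W₀ : Submodule ℂ (Shrink.{0} V) := W.map ℓ.symm.toLinearMap with hW₀
    have hW₀inv : ∀ n ∈ N₀, ∀ v ∈ W₀, ρ₀ n v ∈ W₀ := by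
      rintro n₀ hn₀ v ⟨w, hw, rfl⟩
      refine ⟨ρ (e n₀) w, hWinv (e n₀) hn₀ w hw, ?_⟩
      rw [hρ₀]
      simp
    rcases hall W₀ hW₀inv with h | h
    · left
      rw [eq_bot_iff]
      intro w hw
      have : ℓ.symm w ∈ W₀ := ⟨w, hw, rfl⟩
      rw [h] at this
      simp only [Submodule.mem_bot] at this ⊢
      exact ℓ.symm.injective (by simpa using this)
    · right
      rw [eq_top_iff]
      intro w _
      have : ℓ.symm w ∈ (⊤ : Submodule ℂ (Shrink.{0} V)) := trivial
      rw [← h] at this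
      obtain ⟨w', hw', hww⟩ := this
      rwa [show w' = w from ℓ.symm.injective hww] at hw'
  -- apply the core theorem
  have hmem : e.symm n ∈ N₀ := by
    simp only [N₀, Subgroup.mem_comap]
    rw [show e.toMonoidHom (e.symm n) = n from e.apply_symm_apply n]
    exact hn
  have hres := core N₀ σ₀ hgen₀ ρ₀ hirr₀ hnotirrN₀ (e.symm n) hmem
  have htr : ρ₀ (e.symm n * σ₀) = ℓ.symm.conj (ρ (n * σ)) := by
    show ℓ.symm.conj (ρ (e (e.symm n * σ₀))) = _
    rw [map_mul]
    simp only [σ₀, e.apply_symm_apply]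
  rw [htr] at hres
  rwa [LinearMap.trace_conj'] at hres
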